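/- (Multivariate FKG inequality) Let L be a finite distributive lattice, μ a probability measure on L satisfying μ(A)μ(B) ≤ μ(A∨B)μ(A∧B) for all A, B ∈ L, and let f_1,...,f_n : L → ℝ≥0 each be decreasing (A ≤ B implies f_i(A) ≥ f_i(B)). Then ∏_{i=1}^n (∑_{A∈L} μ(A) f_i(A)) ≤ ∑_{A∈L} μ(A) ∏_{i=1}^n f_i(A). -/

import Mathlib

open Finset

lemma fkg_anti {L : Type} [Fintype L] [DistribLattice L]
    (μ f g : L → ℝ) (hμ0 : ∀ a, 0 ≤ μ a)
    (hlog : ∀ a b : L, μ a * μ b ≤ μ (a ⊔ b) * μ (a ⊓ b))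
    (hf0 : ∀ a, 0 ≤ f a) (hg0 : ∀ a, 0 ≤ g a)
    (hf : ∀ a b : L, a ≤ b → f b ≤ f a) (hg : ∀ a b : L, a ≤ b → g b ≤ g a) :
    (∑ a, μ a * f a) * ∑ a, μ a * g a ≤ (∑ a, μ a) * ∑ a, μ a * (f a * g a) := by
  have := fkg (α := Lᵒᵈ) (μ := fun a => μ (OrderDual.ofDual a))
    (f := fun a => f (OrderDual.ofDual a)) (g := fun a => g (OrderDual.ofDual a))
    (fun a => hμ0 _) (fun a => hf0 _) (fun a => hg0 _)
    (fun a b hab => hf _ _ hab) (fun a b hab => hg _ _ hab)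
    (fun a b => hlog (OrderDual.ofDual a) (OrderDual.ofDual b))
  exact this

/-- Multivariate FKG inequality for decreasing non-negative functions and a
log-supermodular probability measure on a finite distributive lattice. -/
theorem stmt_8 {L : Type} [Fintype L] [DistribLattice L]
    (μ : L → ℝ) (hμ0 : ∀ a, 0 ≤ μ a) (hμ1 : ∑ a, μ a = 1)
    (hlog : ∀ a b : L, μ a * μ b ≤ μ (a ⊔ b) * μ (a ⊓ b))
    (n : ℕ) (f : Fin n → L → ℝ)
    (hf0 : ∀ i a, 0 ≤ f i a)
    (hfdec : ∀ i, ∀ a b : L, a ≤ b → f i b ≤ f i a) :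
    ∏ i, (∑ a, μ a * f i a) ≤ ∑ a, μ a * ∏ i, f i a := by
  induction n with
  | zero => simp [hμ1]
  | succ n ih =>
    set g : L → ℝ := fun a => ∏ i : Fin n, f i.succ a with hgdef
    have hg0 : ∀ a, 0 ≤ g a := fun a => Finset.prod_nonneg fun i _ => hf0 _ _
    have hgdec : ∀ a b : L, a ≤ b → g b ≤ g a := fun a b hab =>
      Finset.prod_le_prod (fun i _ => hf0 _ _) (fun i _ => hfdec _ _ _ hab)
    have hih := ih (fun i => f i.succ) (fun i a => hf0 _ _) (fun i => hfdec _)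
    have h0 : (0:ℝ) ≤ ∑ a, μ a * f 0 a :=
      Finset.sum_nonneg fun a _ => mul_nonneg (hμ0 a) (hf0 _ _)
    calc ∏ i, (∑ a, μ a * f i a)
        = (∑ a, μ a * f 0 a) * ∏ i : Fin n, (∑ a, μ a * f i.succ a) := by
          rw [Fin.prod_univ_succ]
      _ ≤ (∑ a, μ a * f 0 a) * ∑ a, μ a * g a := by
          exact mul_le_mul_of_nonneg_left hih h0
      _ ≤ (∑ a, μ a) * ∑ a, μ a * (f 0 a * g a) :=
          fkg_anti μ (f 0) g hμ0 hlog (hf0 0) hg0 (hfdec 0) hgdec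
      _ = ∑ a, μ a * ∏ i, f (↑i) a := by
          rw [hμ1, one_mul]
          refine Finset.sum_congr rfl fun a _ => ?_
          rw [Fin.prod_univ_succ]
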